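/- If G is a quasi-line graph, then for every vertex x of G, the b-chromatic number of the vertex-deleted subgraph satisfies b(G - {x}) ≥ b(G) - 2. -/
import Mathlib


/-- A b-coloring of `G` with `k` colors: a proper vertex coloring `c : V → Fin k` such
that every color class contains a vertex adjacent to a vertex of every other color class. -/
def SimpleGraph.IsBColoring {V : Type*} (G : SimpleGraph V) {k : ℕ} (c : V → Fin k) : Prop :=
  (∀ u v, G.Adj u v → c u ≠ c v) ∧
    ∀ i : Fin k, ∃ v, c v = i ∧ ∀ j : Fin k, j ≠ i → ∃ u, G.Adj v u ∧ c u = j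

/-- The b-chromatic number of `G`: the largest `k` such that `G` admits a b-coloring
with `k` colors. -/
noncomputable def SimpleGraph.bChromaticNumber {V : Type*} (G : SimpleGraph V) : ℕ :=
  sSup {k | ∃ c : V → Fin k, G.IsBColoring c}

/-- A quasi-line graph: the neighborhood of each vertex is covered by at most two cliques. -/
def SimpleGraph.IsQuasiLine {V : Type*} (G : SimpleGraph V) : Prop :=
  ∀ v : V, ∃ A B : Set V, G.IsClique A ∧ G.IsClique B ∧ G.neighborSet v ⊆ A ∪ B

namespace BColAux

variable {W : Type*}

/-- proper coloring with respect to a graph -/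
def Proper (H : SimpleGraph W) {k : ℕ} (d : W → Fin k) : Prop :=
  ∀ u v, H.Adj u v → d u ≠ d v

/-- class `i` has a dominant (b-)vertex with respect to palette `P` -/
def Dom (H : SimpleGraph W) {k : ℕ} (d : W → Fin k) (P : Finset (Fin k)) (i : Fin k) : Prop :=
  ∃ v, d v = i ∧ ∀ m ∈ P, m ≠ i → ∃ u, H.Adj v u ∧ d u = m

/-- a representative of a needy class: colored `i`, no neighbor colored `a`,
sees every palette color other than `i` and `a`. -/
def RepData (H : SimpleGraph W) {k : ℕ} (d : W → Fin k) (P : Finset (Fin k))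
    (a i : Fin k) (v : W) : Prop :=
  d v = i ∧ (∀ u, H.Adj v u → d u ≠ a) ∧
    (∀ m ∈ P, m ≠ i → m ≠ a → ∃ u, H.Adj v u ∧ d u = m)

lemma repData_a_dom {H : SimpleGraph W} {k : ℕ} {d : W → Fin k} {P : Finset (Fin k)}
    {a : Fin k} {v : W} (h : RepData H d P a a v) : Dom H d P a :=
  ⟨v, h.1, fun m hm hmi => h.2.2 m hm hmi hmi⟩

/-- Core elimination: recolor all of class `j` by a choice function `f`. -/
lemma elim (H : SimpleGraph W) {k : ℕ} {d : W → Fin k} {P : Finset (Fin k)}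
    (hprop : Proper H d) (huses : ∀ w, d w ∈ P)
    (j : Fin k) (f : W → Fin k)
    (hf : ∀ u, d u = j → f u ∈ P ∧ f u ≠ j ∧ ∀ w, H.Adj u w → d w ≠ f u) :
    Proper H (fun u => if d u = j then f u else d u) ∧
      (∀ w, (fun u => if d u = j then f u else d u) w ∈ P.erase j) := by
  constructor
  · intro u v huv
    by_cases hu : d u = j <;> by_cases hv : d v = j <;>
      simp only [hu, hv, if_pos, if_neg, if_true, if_false]
    · exact absurd (hu.trans hv.symm) (hprop u v huv)
    · exact fun hh => (hf u hu).2.2 v huv hh.symm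
    · exact fun hh => (hf v hv).2.2 u huv.symm hh
    · exact hprop u v huv
  · intro w
    by_cases hw : d w = j <;> simp only [hw, if_pos, if_neg, if_true, if_false]
    · exact Finset.mem_erase.mpr ⟨(hf w hw).2.1, (hf w hw).1⟩
    · exact Finset.mem_erase.mpr ⟨hw, huses w⟩

/-- One phase: drop a needy class `j` whose representative lies in clique `C`,
recoloring the representative to `a`. -/
lemma phase (H : SimpleGraph W) {k : ℕ} (d : W → Fin k) (P : Finset (Fin k)) (a : Fin k)
    (C : Set W) (hC : H.IsClique C) (haP : a ∈ P)
    (hprop : Proper H d) (huses : ∀ w, d w ∈ P)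
    (j : Fin k) (hja : j ≠ a) (hjnd : ¬ Dom H d P j)
    (vj : W) (hvj : RepData H d P a j vj) (hvjC : vj ∈ C) :
    ∃ d' : W → Fin k,
      Proper H d' ∧ (∀ w, d' w ∈ P.erase j) ∧
      (∀ i ∈ P.erase j, Dom H d P i → Dom H d' (P.erase j) i) ∧
      (∀ i ∈ P.erase j, ∀ v, RepData H d P a i v → v ∈ C → Dom H d' (P.erase j) i) ∧
      (∀ i ∈ P.erase j, ∀ v, RepData H d P a i v →
        Dom H d' (P.erase j) i ∨ RepData H d' (P.erase j) a i v) := by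
  classical
  have hex : ∀ u, d u = j → ∃ m, m ∈ P ∧ m ≠ j ∧ ∀ w, H.Adj u w → d w ≠ m := by
    intro u hu
    by_contra h
    push_neg at h
    exact hjnd ⟨u, hu, fun m hm hmj => h m hm hmj⟩
  have hfex : ∀ u, ∃ m : Fin k,
      (d u = j → m ∈ P ∧ m ≠ j ∧ ∀ w, H.Adj u w → d w ≠ m) ∧ (u = vj → m = a) := by
    intro u
    by_cases h1 : u = vj
    · subst h1
      exact ⟨a, fun _ => ⟨haP, Ne.symm hja, hvj.2.1⟩, fun _ => rfl⟩
    · by_cases hu : d u = j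
      · obtain ⟨m, hm⟩ := hex u hu
        exact ⟨m, fun _ => hm, fun h => absurd h h1⟩
      · exact ⟨d u, fun h => absurd h hu, fun h => absurd h h1⟩
  choose f hf1 hf2 using hfex
  obtain ⟨hprop', huses'⟩ := elim H hprop huses j f hf1
  set d' : W → Fin k := fun u => if d u = j then f u else d u with hd'def
  have hd'eq : ∀ u, d u ≠ j → d' u = d u := by
    intro u hu; simp only [hd'def, if_neg hu]
  have hd'vj : d' vj = a := by
    simp only [hd'def, if_pos hvj.1]; exact hf2 vj rfl
  have hwit : ∀ (v : W) (m : Fin k), m ≠ j →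
      (∃ u, H.Adj v u ∧ d u = m) → ∃ u, H.Adj v u ∧ d' u = m := by
    rintro v m hm ⟨u, hu, hum⟩
    refine ⟨u, hu, ?_⟩
    rw [hd'eq u (by rw [hum]; exact hm)]
    exact hum
  have hpres : ∀ i ∈ P.erase j, Dom H d P i → Dom H d' (P.erase j) i := by
    rintro i hi ⟨v, hvi, hv⟩
    have hij : i ≠ j := (Finset.mem_erase.mp hi).1
    refine ⟨v, by rw [hd'eq v (by rw [hvi]; exact hij)]; exact hvi, ?_⟩
    intro m hm hmi
    rcases Finset.mem_erase.mp hm with ⟨hmj, hmP⟩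
    exact hwit v m hmj (hv m hmP hmi)
  refine ⟨d', hprop', huses', hpres, ?_, ?_⟩
  · intro i hi v hrv hvC
    have hij : i ≠ j := (Finset.mem_erase.mp hi).1
    have hvne : v ≠ vj := by
      intro h
      apply hij
      rw [← hrv.1, h, hvj.1]
    refine ⟨v, by rw [hd'eq v (by rw [hrv.1]; exact hij)]; exact hrv.1, ?_⟩
    intro m hm hmi
    rcases Finset.mem_erase.mp hm with ⟨hmj, hmP⟩
    by_cases hma : m = a
    · subst hma
      exact ⟨vj, hC hvC hvjC hvne, hd'vj⟩
    · exact hwit v m hmj (hrv.2.2 m hmP hmi hma)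
  · intro i hi v hrv
    have hij : i ≠ j := (Finset.mem_erase.mp hi).1
    have hdv : d' v = i := by rw [hd'eq v (by rw [hrv.1]; exact hij)]; exact hrv.1
    by_cases hA : ∃ u, H.Adj v u ∧ d' u = a
    · left
      refine ⟨v, hdv, ?_⟩
      intro m hm hmi
      rcases Finset.mem_erase.mp hm with ⟨hmj, hmP⟩
      by_cases hma : m = a
      · subst hma; exact hA
      · exact hwit v m hmj (hrv.2.2 m hmP hmi hma)
    · right
      push_neg at hA
      refine ⟨hdv, fun u hu => hA u hu, ?_⟩
      intro m hm hmi hma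
      rcases Finset.mem_erase.mp hm with ⟨hmj, hmP⟩
      exact hwit v m hmj (hrv.2.2 m hmP hmi hma)

/-- Eliminating a needy class `a` (no donor needed). -/
lemma phaseA (H : SimpleGraph W) {k : ℕ} (d : W → Fin k) (P : Finset (Fin k)) (a : Fin k)
    (hand : ¬ Dom H d P a) (hprop : Proper H d) (huses : ∀ w, d w ∈ P) :
    ∃ d' : W → Fin k,
      Proper H d' ∧ (∀ w, d' w ∈ P.erase a) ∧
      (∀ v, d v ≠ a → d' v = d v) ∧
      (∀ (v : W) (m : Fin k), m ≠ a →
        (∃ u, H.Adj v u ∧ d u = m) → ∃ u, H.Adj v u ∧ d' u = m) := by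
  classical
  have hex : ∀ u, d u = a → ∃ m, m ∈ P ∧ m ≠ a ∧ ∀ w, H.Adj u w → d w ≠ m := by
    intro u hu
    by_contra h
    push_neg at h
    exact hand ⟨u, hu, fun m hm hmj => h m hm hmj⟩
  have hfex : ∀ u, ∃ m : Fin k,
      (d u = a → m ∈ P ∧ m ≠ a ∧ ∀ w, H.Adj u w → d w ≠ m) := by
    intro u
    by_cases hu : d u = a
    · obtain ⟨m, hm⟩ := hex u hu
      exact ⟨m, fun _ => hm⟩
    · exact ⟨d u, fun h => absurd h hu⟩
  choose f hf1 using hfex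
  obtain ⟨hprop', huses'⟩ := elim H hprop huses a f hf1
  set d' : W → Fin k := fun u => if d u = a then f u else d u with hd'def
  have hd'eq : ∀ u, d u ≠ a → d' u = d u := by
    intro u hu; simp only [hd'def, if_neg hu]
  refine ⟨d', hprop', huses', hd'eq, ?_⟩
  rintro v m hm ⟨u, hu, hum⟩
  refine ⟨u, hu, ?_⟩
  rw [hd'eq u (by rw [hum]; exact hm)]
  exact hum

/-- From a proper coloring using palette `P` whose classes are all dominant,
a genuine b-coloring with `P.card` colors. -/
lemma relabel (H : SimpleGraph W) {k : ℕ} (d : W → Fin k) (P : Finset (Fin k))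
    (hprop : Proper H d) (huses : ∀ w, d w ∈ P) (hdom : ∀ i ∈ P, Dom H d P i) :
    ∃ c' : W → Fin P.card, H.IsBColoring c' := by
  classical
  let e := P.equivFin
  refine ⟨fun w => e ⟨d w, huses w⟩, ?_, ?_⟩
  · intro u v huv h
    apply hprop u v huv
    exact congrArg Subtype.val (e.injective h)
  · intro i
    obtain ⟨v, hvd, hv⟩ := hdom (e.symm i).1 (e.symm i).2
    refine ⟨v, ?_, ?_⟩
    · show e ⟨d v, huses v⟩ = i
      have h1 : (⟨d v, huses v⟩ : {y // y ∈ P}) = e.symm i := Subtype.ext hvd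
      rw [h1, Equiv.apply_symm_apply]
    · intro jj hjj
      have hne : ((e.symm jj : {y // y ∈ P}) : Fin k) ≠ (e.symm i : {y // y ∈ P}) := by
        intro h
        exact hjj (e.symm.injective (Subtype.ext h))
      obtain ⟨u, hu, hud⟩ := hv (e.symm jj).1 (e.symm jj).2 hne
      refine ⟨u, hu, ?_⟩
      show e ⟨d u, huses u⟩ = jj
      have h1 : (⟨d u, huses u⟩ : {y // y ∈ P}) = e.symm jj := Subtype.ext hud
      rw [h1, Equiv.apply_symm_apply]

/-- The main construction. -/
lemma key {V : Type*} [Fintype V] [DecidableEq V] (G : SimpleGraph V) (hG : G.IsQuasiLine)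
    (x : V) {k : ℕ} (c : V → Fin k) (hc : G.IsBColoring c) :
    ∃ m : ℕ, k ≤ m + 2 ∧
      ∃ c' : ({x}ᶜ : Set V) → Fin m, (G.induce ({x}ᶜ : Set V)).IsBColoring c' := by
  classical
  obtain ⟨A, B, hA, hB, hAB⟩ := hG x
  set S : Set V := {x}ᶜ with hS
  set H : SimpleGraph S := G.induce S with hH
  have hadj : ∀ u v : S, H.Adj u v ↔ G.Adj ↑u ↑v := by
    intro u v
    rw [hH]
    simp
  set a : Fin k := c x with ha
  have hk0 : 0 < k := a.pos
  set d0 : S → Fin k := fun w => c ↑w with hd0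
  set P0 : Finset (Fin k) := Finset.univ with hP0
  have hP0card : P0.card = k := by simp [hP0]
  have huses0 : ∀ w, d0 w ∈ P0 := fun w => Finset.mem_univ _
  have hprop0 : Proper H d0 := by
    intro u v huv
    exact hc.1 ↑u ↑v ((hadj u v).mp huv)
  set CA : Set S := Subtype.val ⁻¹' A with hCAdef
  set CB : Set S := Subtype.val ⁻¹' B with hCBdef
  have hCA : H.IsClique CA := by
    intro u hu v hv huvne
    exact (hadj u v).mpr (hA hu hv (fun h => huvne (Subtype.ext h)))
  have hCB : H.IsClique CB := by
    intro u hu v hv huvne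
    exact (hadj u v).mpr (hB hu hv (fun h => huvne (Subtype.ext h)))
  -- representatives for needy classes
  have hrep : ∀ i : Fin k, i ≠ a → ¬ Dom H d0 P0 i →
      ∃ v : S, RepData H d0 P0 a i v ∧ (v ∈ CA ∨ v ∈ CB) := by
    intro i hia hnd
    obtain ⟨v, hv, hall⟩ := hc.2 i
    have hvx : v ≠ x := by
      intro h
      apply hia
      rw [← hv, h]
    have hvS : v ∈ S := Set.mem_compl_singleton_iff.mpr hvx
    have hd0v : d0 (⟨v, hvS⟩ : S) = i := hv
    have hwitm : ∀ m : Fin k, m ≠ i → m ≠ a → ∃ u, H.Adj ⟨v, hvS⟩ u ∧ d0 u = m := by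
      intro m hmi hma
      obtain ⟨u, hu, hum⟩ := hall m hmi
      have hux : u ≠ x := by
        intro h
        apply hma
        rw [← hum, h]
      exact ⟨⟨u, Set.mem_compl_singleton_iff.mpr hux⟩, (hadj _ _).mpr hu, hum⟩
    have hnoa : ∀ u, H.Adj ⟨v, hvS⟩ u → d0 u ≠ a := by
      intro u hu hua
      apply hnd
      refine ⟨⟨v, hvS⟩, hd0v, ?_⟩
      intro m _ hmi
      by_cases hma : m = a
      · subst hma; exact ⟨u, hu, hua⟩
      · exact hwitm m hmi hma
    have hvAB : v ∈ A ∪ B := by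
      obtain ⟨u, hu, hua⟩ := hall a (Ne.symm hia)
      have hux : u = x := by
        by_contra h
        exact hnoa ⟨u, Set.mem_compl_singleton_iff.mpr h⟩ ((hadj _ _).mpr hu) hua
      apply hAB
      rw [SimpleGraph.mem_neighborSet]
      rw [hux] at hu
      exact hu.symm
    refine ⟨⟨v, hvS⟩, ⟨hd0v, hnoa, fun m _ hmi hma => hwitm m hmi hma⟩, ?_⟩
    cases hvAB with
    | inl h => exact Or.inl h
    | inr h => exact Or.inr h
  by_cases hDa : Dom H d0 P0 a
  · -- two-phase case
    have step1 : ∃ (d1 : S → Fin k) (P1 : Finset (Fin k)),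
        a ∈ P1 ∧ k ≤ P1.card + 1 ∧ Proper H d1 ∧ (∀ w, d1 w ∈ P1) ∧
        ∀ i ∈ P1, Dom H d1 P1 i ∨ ∃ v, RepData H d1 P1 a i v ∧ v ∈ CB := by
      by_cases hEx : ∃ j, j ≠ a ∧ ¬ Dom H d0 P0 j ∧ ∃ v, RepData H d0 P0 a j v ∧ v ∈ CA
      · obtain ⟨j, hja, hjnd, vj, hvj, hvjC⟩ := hEx
        obtain ⟨d1, hprop1, huses1, hpres, hrepC, hrepKeep⟩ :=
          phase H d0 P0 a CA hCA (Finset.mem_univ a) hprop0 huses0 j hja hjnd vj hvj hvjC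
        refine ⟨d1, P0.erase j, Finset.mem_erase.mpr ⟨Ne.symm hja, Finset.mem_univ a⟩,
          ?_, hprop1, huses1, ?_⟩
        · rw [Finset.card_erase_of_mem (Finset.mem_univ j), hP0card]
          omega
        · intro i hi
          by_cases hDi : Dom H d0 P0 i
          · exact Or.inl (hpres i hi hDi)
          · have hia : i ≠ a := by
              intro h
              rw [h] at hDi
              exact hDi hDa
            obtain ⟨v, hrv, hvAB⟩ := hrep i hia hDi
            cases hvAB with
            | inl hvA => exact Or.inl (hrepC i hi v hrv hvA)
            | inr hvB =>
              cases hrepKeep i hi v hrv with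
              | inl h => exact Or.inl h
              | inr h => exact Or.inr ⟨v, h, hvB⟩
      · push_neg at hEx
        refine ⟨d0, P0, Finset.mem_univ a, by omega, hprop0, huses0, ?_⟩
        intro i hi
        by_cases hDi : Dom H d0 P0 i
        · exact Or.inl hDi
        · have hia : i ≠ a := by
            intro h
            rw [h] at hDi
            exact hDi hDa
          obtain ⟨v, hrv, hvAB⟩ := hrep i hia hDi
          cases hvAB with
          | inl hvA => exact absurd hvA (hEx i hia hDi v hrv)
          | inr hvB => exact Or.inr ⟨v, hrv, hvB⟩
    obtain ⟨d1, P1, haP1, hcard1, hprop1, huses1, hinv1⟩ := step1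
    have step2 : ∃ (d2 : S → Fin k) (P2 : Finset (Fin k)),
        P1.card ≤ P2.card + 1 ∧ Proper H d2 ∧ (∀ w, d2 w ∈ P2) ∧ ∀ i ∈ P2, Dom H d2 P2 i := by
      by_cases hEx : ∃ j ∈ P1, j ≠ a ∧ ¬ Dom H d1 P1 j
      · obtain ⟨j, hjP, hja, hjnd⟩ := hEx
        obtain ⟨vj, hvj, hvjB⟩ := (hinv1 j hjP).resolve_left hjnd
        obtain ⟨d2, hprop2, huses2, hpres, hrepC, _⟩ :=
          phase H d1 P1 a CB hCB haP1 hprop1 huses1 j hja hjnd vj hvj hvjB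
        have hP1pos : 0 < P1.card := Finset.card_pos.mpr ⟨j, hjP⟩
        refine ⟨d2, P1.erase j, ?_, hprop2, huses2, ?_⟩
        · rw [Finset.card_erase_of_mem hjP]
          omega
        · intro i hi
          by_cases hDi : Dom H d1 P1 i
          · exact hpres i hi hDi
          · have hiP1 : i ∈ P1 := (Finset.mem_erase.mp hi).2
            obtain ⟨v, hrv, hvB⟩ := (hinv1 i hiP1).resolve_left hDi
            exact hrepC i hi v hrv hvB
      · push_neg at hEx
        refine ⟨d1, P1, by omega, hprop1, huses1, ?_⟩
        intro i hiP
        by_cases hia : i = a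
        · subst hia
          cases hinv1 a hiP with
          | inl h => exact h
          | inr h =>
            obtain ⟨v, hrv, _⟩ := h
            exact repData_a_dom hrv
        · exact hEx i hiP hia
    obtain ⟨d2, P2, hcard2, hprop2, huses2, hdom2⟩ := step2
    obtain ⟨c', hc'⟩ := relabel H d2 P2 hprop2 huses2 hdom2
    exact ⟨P2.card, by omega, c', hc'⟩
  · -- eliminate class a
    obtain ⟨d1, hprop1, huses1, hd1eq, hwit1⟩ := phaseA H d0 P0 a hDa hprop0 huses0
    have hdom1 : ∀ i ∈ P0.erase a, Dom H d1 (P0.erase a) i := by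
      intro i hi
      have hia : i ≠ a := (Finset.mem_erase.mp hi).1
      obtain ⟨v, hv, hall⟩ := hc.2 i
      have hvx : v ≠ x := by
        intro h
        apply hia
        rw [← hv, h]
      have hvS : v ∈ S := Set.mem_compl_singleton_iff.mpr hvx
      have hd0v : d0 (⟨v, hvS⟩ : S) = i := hv
      refine ⟨⟨v, hvS⟩, by rw [hd1eq _ (by rw [hd0v]; exact hia)]; exact hd0v, ?_⟩
      intro m hm hmi
      have hma : m ≠ a := (Finset.mem_erase.mp hm).1
      obtain ⟨u, hu, hum⟩ := hall m hmi
      have hux : u ≠ x := by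
        intro h
        apply hma
        rw [← hum, h]
      refine hwit1 _ m hma ⟨⟨u, Set.mem_compl_singleton_iff.mpr hux⟩, (hadj _ _).mpr hu, hum⟩
    obtain ⟨c', hc'⟩ := relabel H d1 (P0.erase a) hprop1 huses1 hdom1
    refine ⟨(P0.erase a).card, ?_, c', hc'⟩
    rw [Finset.card_erase_of_mem (Finset.mem_univ a), hP0card]
    omega

end BColAux

theorem bChromaticNumber_deleteVert_ge_of_quasiLine {V : Type*} [Fintype V] [DecidableEq V]
    (G : SimpleGraph V) (hG : G.IsQuasiLine) (x : V) :
    ((G.induce ({x}ᶜ : Set V)).bChromaticNumber : ℤ) ≥ G.bChromaticNumber - 2 := by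
  classical
  have hbddG : BddAbove {m | ∃ c : V → Fin m, G.IsBColoring c} := by
    refine ⟨Fintype.card V, ?_⟩
    rintro m ⟨c, hc⟩
    have hs : Function.Surjective c := fun i => (hc.2 i).imp fun v h => h.1
    simpa using Fintype.card_le_of_surjective c hs
  have hbddH : BddAbove {m | ∃ c' : ({x}ᶜ : Set V) → Fin m,
      (G.induce ({x}ᶜ : Set V)).IsBColoring c'} := by
    refine ⟨Fintype.card ({x}ᶜ : Set V), ?_⟩
    rintro m ⟨c', hc'⟩
    have hs : Function.Surjective c' := fun i => (hc'.2 i).imp fun v h => h.1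
    simpa using Fintype.card_le_of_surjective c' hs
  by_cases h2 : G.bChromaticNumber ≤ 2
  · have h0 : (0 : ℤ) ≤ ((G.induce ({x}ᶜ : Set V)).bChromaticNumber : ℤ) :=
      Int.natCast_nonneg _
    have h2' : (G.bChromaticNumber : ℤ) ≤ 2 := by exact_mod_cast h2
    linarith
  · have hne : {m | ∃ c : V → Fin m, G.IsBColoring c}.Nonempty := by
      by_contra h
      rw [Set.not_nonempty_iff_eq_empty] at h
      apply h2
      unfold SimpleGraph.bChromaticNumber
      rw [h, csSup_empty]
      exact bot_le
    have hmem : G.bChromaticNumber ∈ {m | ∃ c : V → Fin m, G.IsBColoring c} :=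
      Nat.sSup_mem hne hbddG
    obtain ⟨c, hc⟩ := hmem
    obtain ⟨m, hm, c', hc'⟩ := BColAux.key G hG x c hc
    have hle : m ≤ (G.induce ({x}ᶜ : Set V)).bChromaticNumber :=
      le_csSup hbddH ⟨c', hc'⟩
    have h1 : (G.bChromaticNumber : ℤ) ≤ (m : ℤ) + 2 := by exact_mod_cast hm
    have h2'' : (m : ℤ) ≤ ((G.induce ({x}ᶜ : Set V)).bChromaticNumber : ℤ) := by
      exact_mod_cast hle
    linarith
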